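/- Let n ≥ 1, let C > 0, and let ω_i^(k) (for i, k = 1, …, n) be positive real numbers with geometric means ω_i* = (∏_{k=1}^n ω_i^(k))^{1/n}. If A = ‖a_{ik}‖ and B = ‖b_{ik}‖ are two n × n positive matrices each satisfying, with λ_A = (∏_{i,r} a_{ir})^{1/n²} (respectively λ_B = (∏_{i,r} b_{ir})^{1/n²}), the relations ω_i* = C (∏_{k=1}^n a_{ik})^{1/n} and ω_i^(k) = (1/λ_A) a_{ik} ω_k* (respectively with B and λ_B), then A = B. Explicitly, the unique such matrix is given by a_{ik} = λ ω_i^(k)/ω_k* with λ = (1/C)(∏_{k=1}^n ω_k*)^{1/n}. -/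

import Mathlib

lemma gmm_aux (n : ℕ) (hn : 1 ≤ n) (C : ℝ) (hC : 0 < C)
    (ω : Fin n → Fin n → ℝ) (hω : ∀ i k, 0 < ω i k)
    (ωs : Fin n → ℝ) (hωs : ∀ i, ωs i = (∏ k, ω i k) ^ ((1 : ℝ) / n))
    (a : Fin n → Fin n → ℝ)
    (ha : ∀ i k, 0 < a i k)
    (ha1 : ∀ i, ωs i = C * (∏ k, a i k) ^ ((1 : ℝ) / n))
    (ha2 : ∀ i k,
      ω i k = (1 / ((∏ i, ∏ r, a i r) ^ ((1 : ℝ) / (n : ℝ) ^ 2))) * a i k * ωs k) :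
    ∀ i k, a i k = ((1 / C) * (∏ r, ωs r) ^ ((1 : ℝ) / n)) * ω i k / ωs k := by
  have hωs_pos : ∀ i, 0 < ωs i := by
    intro i
    rw [hωs i]
    exact Real.rpow_pos_of_pos (Finset.prod_pos fun k _ => hω i k) _
  set lA : ℝ := (∏ i, ∏ r, a i r) ^ ((1 : ℝ) / (n : ℝ) ^ 2) with hlA
  have hlA_pos : 0 < lA :=
    Real.rpow_pos_of_pos (Finset.prod_pos fun i _ => Finset.prod_pos fun r _ => ha i r) _
  have hform : ∀ i k, a i k = lA * ω i k / ωs k := by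
    intro i k
    have h := ha2 i k
    rw [eq_div_iff (hωs_pos k).ne']
    field_simp at h
    linear_combination -h
  set P : ℝ := (∏ r, ωs r) ^ ((1 : ℝ) / n) with hP
  have hP_pos : 0 < P := Real.rpow_pos_of_pos (Finset.prod_pos fun r _ => hωs_pos r) _
  have hn0 : (n : ℝ) ≠ 0 := by positivity
  -- compute lA = P / C using ha1 at some index
  have i0 : Fin n := ⟨0, hn⟩
  have hprod : ∏ k, a i0 k = lA ^ n * (∏ k, ω i0 k) / (∏ k, ωs k) := by
    rw [Finset.prod_congr rfl (fun k _ => hform i0 k)]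
    rw [Finset.prod_div_distrib, Finset.prod_mul_distrib, Finset.prod_const,
      Finset.card_univ, Fintype.card_fin]
  have hprodω : (0:ℝ) < ∏ k, ω i0 k := Finset.prod_pos fun k _ => hω i0 k
  have hprodωs : (0:ℝ) < ∏ k, ωs k := Finset.prod_pos fun k _ => hωs_pos k
  have hrpow : (∏ k, a i0 k) ^ ((1 : ℝ) / n) = lA * ωs i0 / P := by
    rw [hprod, Real.div_rpow (mul_pos (pow_pos hlA_pos n) hprodω).le hprodωs.le,
      Real.mul_rpow (pow_pos hlA_pos n).le hprodω.le, ← hωs i0, hP]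
    congr 1
    · congr 1
      rw [← Real.rpow_natCast lA n, ← Real.rpow_mul hlA_pos.le]
      rw [mul_one_div, div_self hn0, Real.rpow_one]
  have hkey := ha1 i0
  rw [hrpow] at hkey
  have hlA_eq : lA = P / C := by
    have hws := hωs_pos i0
    field_simp at hkey
    have h2 : P * ωs i0 = (C * lA) * ωs i0 := by linear_combination (ωs i0) * hkey
    have h3 := mul_right_cancel₀ hws.ne' h2
    field_simp
    linarith [h3]
  intro i k
  rw [hform i k, hlA_eq]
  field_simp

/-- Uniqueness of the matrix A associated to a positive family,
together with its explicit form a_{ik} = λ ω_i^(k)/ω_k* with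
λ = (1/C)(∏ ω_k*)^{1/n}. -/
theorem gmm_matrix_unique (n : ℕ) (hn : 1 ≤ n) (C : ℝ) (hC : 0 < C)
    (ω : Fin n → Fin n → ℝ) (hω : ∀ i k, 0 < ω i k)
    (ωs : Fin n → ℝ) (hωs : ∀ i, ωs i = (∏ k, ω i k) ^ ((1 : ℝ) / n))
    (a b : Fin n → Fin n → ℝ)
    (ha : ∀ i k, 0 < a i k) (hb : ∀ i k, 0 < b i k)
    (ha1 : ∀ i, ωs i = C * (∏ k, a i k) ^ ((1 : ℝ) / n))
    (ha2 : ∀ i k,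
      ω i k = (1 / ((∏ i, ∏ r, a i r) ^ ((1 : ℝ) / (n : ℝ) ^ 2))) * a i k * ωs k)
    (hb1 : ∀ i, ωs i = C * (∏ k, b i k) ^ ((1 : ℝ) / n))
    (hb2 : ∀ i k,
      ω i k = (1 / ((∏ i, ∏ r, b i r) ^ ((1 : ℝ) / (n : ℝ) ^ 2))) * b i k * ωs k) :
    a = b ∧
    (∀ i k, a i k = ((1 / C) * (∏ r, ωs r) ^ ((1 : ℝ) / n)) * ω i k / ωs k) := by
  have haf := gmm_aux n hn C hC ω hω ωs hωs a ha ha1 ha2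
  have hbf := gmm_aux n hn C hC ω hω ωs hωs b hb hb1 hb2
  exact ⟨funext fun i => funext fun k => (haf i k).trans (hbf i k).symm, haf⟩
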